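/- Let γ⁺ ≥ 1 and γ⁻ ≥ 1 be real numbers, let c₀ ≥ 1 and let s be a real number with 0 ≤ s ≤ c₀. Let 0 < n₁ ≤ n₂, and for i = 1, 2 let xᵢ > 0 satisfy xᵢ^(γ⁺/γ⁻)·(xᵢ − s·nᵢ) = nᵢ·xᵢ. Then x₂^γ⁺ − x₁^γ⁺ ≥ (min{1, γ⁺/γ⁻}/2)·(n₂^γ⁻ − n₁^γ⁻). Equivalently, the map n ↦ P(n·s, n) − (min{1, γ⁺/γ⁻}/2)·n^γ⁻ is nondecreasing on (0, ∞). -/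

import Mathlib

open Set

private lemma biFluid_aux_hasDerivAt (s α u : ℝ) (hu : 0 < u)
    (hd : 0 < 1 + s * u ^ α) :
    HasDerivAt (fun u : ℝ => u / (1 + s * u ^ α))
      ((1 + s * (1 - α) * u ^ α) / (1 + s * u ^ α) ^ 2) u := by
  have h1 : HasDerivAt (fun u : ℝ => 1 + s * u ^ α) (s * (α * u ^ (α - 1))) u := by
    have h := (Real.hasDerivAt_rpow_const (x := u) (p := α) (Or.inl hu.ne')).const_mul s
    simpa using h.const_add 1
  have h2 := (hasDerivAt_id u).div h1 hd.ne'
  refine h2.congr_deriv ?_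
  have hx : u ^ (α - 1) * u = u ^ α := by
    rw [Real.rpow_sub hu, Real.rpow_one]
    field_simp
  have : (1 : ℝ) + s * (1 - α) * u ^ α = 1 * (1 + s * u ^ α) - id u * (s * (α * u ^ (α - 1))) := by
    simp only [id]
    linear_combination (s * α) * hx
  rw [this]

/-- Monotonicity of `n ↦ P(n·s, n) − (min{1,γ⁺/γ⁻}/2)·n^γ⁻`:
for `0 < n₁ ≤ n₂` and roots `xᵢ` at `(ρ,n) = (s·nᵢ, nᵢ)`,
`x₂^γ⁺ − x₁^γ⁺ ≥ (min{1,γ⁺/γ⁻}/2)·(n₂^γ⁻ − n₁^γ⁻)`. -/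
theorem biFluid_pressure_along_ray_monotone
    (gp gm c₀ s n₁ n₂ x₁ x₂ : ℝ) (hgp : 1 ≤ gp) (hgm : 1 ≤ gm)
    (hc₀ : 1 ≤ c₀) (hs₀ : 0 ≤ s) (hsc : s ≤ c₀)
    (hn₁ : 0 < n₁) (hn : n₁ ≤ n₂)
    (hx₁ : 0 < x₁) (heq₁ : x₁ ^ (gp / gm) * (x₁ - s * n₁) = n₁ * x₁)
    (hx₂ : 0 < x₂) (heq₂ : x₂ ^ (gp / gm) * (x₂ - s * n₂) = n₂ * x₂) :
    min 1 (gp / gm) / 2 * (n₂ ^ gm - n₁ ^ gm) ≤ x₂ ^ gp - x₁ ^ gp := by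
  have hgm0 : (0:ℝ) < gm := lt_of_lt_of_le one_pos hgm
  have hgp0 : (0:ℝ) < gp := lt_of_lt_of_le one_pos hgp
  set α : ℝ := 1 - gm / gp with hα
  set m : ℝ := min 1 (gp / gm) with hm
  have hm0 : 0 < m := lt_min one_pos (div_pos hgp0 hgm0)
  have hm1 : m ≤ 1 := min_le_left _ _
  have hmθ : m ≤ gp / gm := min_le_right _ _
  set f : ℝ → ℝ := fun u => u / (1 + s * u ^ α) with hf
  have hden : ∀ u : ℝ, 0 < u → 0 < 1 + s * u ^ α := by
    intro u hu
    have := Real.rpow_pos_of_pos hu α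
    nlinarith [mul_nonneg hs₀ this.le]
  have hden1 : ∀ u : ℝ, 0 < u → 1 ≤ 1 + s * u ^ α := by
    intro u hu
    nlinarith [mul_nonneg hs₀ (Real.rpow_pos_of_pos hu α).le]
  have hfpos : ∀ u : ℝ, 0 < u → 0 < f u := fun u hu => div_pos hu (hden u hu)
  have hfle : ∀ u : ℝ, 0 < u → f u ≤ u := by
    intro u hu
    rw [hf, div_le_iff₀ (hden u hu)]
    nlinarith [hden1 u hu]
  -- key numerator bound : m * (1 + s*(1-α)*u^α) ≤ (1 + s*u^α)^2
  have hkey : ∀ u : ℝ, 0 < u → m * (1 + s * (1 - α) * u ^ α) ≤ (1 + s * u ^ α) ^ 2 := by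
    intro u hu
    have hua : 0 < u ^ α := Real.rpow_pos_of_pos hu α
    have h1α : 1 - α = gm / gp := by rw [hα]; ring
    have hm1α : m * (1 - α) ≤ 1 := by
      rw [h1α]
      calc m * (gm / gp) ≤ (gp / gm) * (gm / gp) :=
            mul_le_mul_of_nonneg_right hmθ (by positivity)
        _ = 1 := by field_simp
    have hs' : 0 ≤ s * u ^ α := mul_nonneg hs₀ hua.le
    nlinarith [mul_nonneg hs' hs', mul_le_mul_of_nonneg_right hm1α hs']
  have hderivpos : ∀ u : ℝ, 0 < u →
      0 < (1 + s * (1 - α) * u ^ α) / (1 + s * u ^ α) ^ 2 := by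
    intro u hu
    have h1α : (0:ℝ) < 1 - α := by rw [hα]; have := div_pos hgm0 hgp0; linarith
    have hua : 0 < u ^ α := Real.rpow_pos_of_pos hu α
    have : 0 < 1 + s * (1 - α) * u ^ α := by nlinarith [mul_nonneg hs₀ hua.le]
    exact div_pos this (pow_pos (hden u hu) 2)
  -- f is strictly monotone on Ioi 0
  have hfmono : StrictMonoOn f (Ioi 0) := by
    apply strictMonoOn_of_deriv_pos (convex_Ioi 0)
    · intro u hu
      exact ((biFluid_aux_hasDerivAt s α u hu (hden u hu)).differentiableAt.continuousAt).continuousWithinAt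
    · intro u hu
      rw [interior_Ioi] at hu
      rw [(biFluid_aux_hasDerivAt s α u hu (hden u hu)).deriv]
      exact hderivpos u hu
  -- G is monotone on Ioi 0
  set G : ℝ → ℝ := fun u => u ^ gm - m / 2 * f u ^ gm with hG
  have hGderiv : ∀ u : ℝ, 0 < u → HasDerivAt G
      (gm * u ^ (gm - 1) - m / 2 * ((1 + s * (1 - α) * u ^ α) / (1 + s * u ^ α) ^ 2 * gm * f u ^ (gm - 1))) u := by
    intro u hu
    exact (Real.hasDerivAt_rpow_const (Or.inl hu.ne')).sub
      (((biFluid_aux_hasDerivAt s α u hu (hden u hu)).rpow_const (Or.inl (hfpos u hu).ne')).const_mul (m / 2))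
  have hGmono : MonotoneOn G (Ioi 0) := by
    apply monotoneOn_of_deriv_nonneg (convex_Ioi 0)
    · intro u hu
      exact ((hGderiv u hu).differentiableAt.continuousAt).continuousWithinAt
    · intro u hu
      rw [interior_Ioi] at hu
      exact (hGderiv u hu).differentiableAt.differentiableWithinAt
    · intro u hu
      rw [interior_Ioi] at hu
      rw [(hGderiv u hu).deriv]
      have hfd := hderivpos u hu
      have hmfd : m * ((1 + s * (1 - α) * u ^ α) / (1 + s * u ^ α) ^ 2) ≤ 1 := by
        rw [mul_div_assoc'] at *
        exact div_le_one_of_le₀ (hkey u hu) (by positivity)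
      have hfd' : f u ^ (gm - 1) ≤ u ^ (gm - 1) :=
        Real.rpow_le_rpow (hfpos u hu).le (hfle u hu) (by linarith)
      have hup : 0 < u ^ (gm - 1) := Real.rpow_pos_of_pos hu _
      have hfp : 0 < f u ^ (gm - 1) := Real.rpow_pos_of_pos (hfpos u hu) _
      nlinarith [mul_le_mul_of_nonneg_right hmfd hup.le,
        mul_le_mul_of_nonneg_left hfd' (mul_nonneg hm0.le hfd.le)]
  -- relate x_i, n_i to u_i = x_i ^ (gp/gm)
  have hn₂ : 0 < n₂ := hn₁.trans_le hn
  have hfu : ∀ x n : ℝ, 0 < x → 0 < n →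
      x ^ (gp / gm) * (x - s * n) = n * x → f (x ^ (gp / gm)) = n := by
    intro x n hx hnn heq
    have hxθ : 0 < x ^ (gp / gm) := Real.rpow_pos_of_pos hx _
    have huα : (x ^ (gp / gm)) ^ α = x ^ (gp / gm) / x := by
      rw [← Real.rpow_mul hx.le]
      have hexp : gp / gm * α = gp / gm - 1 := by
        rw [hα]; field_simp
      rw [hexp, Real.rpow_sub hx, Real.rpow_one]
    rw [hf]
    simp only [huα]
    rw [div_eq_iff (by
      have : 0 < 1 + s * (x ^ (gp / gm) / x) := by
        have := mul_nonneg hs₀ (div_pos hxθ hx).le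
        linarith
      exact this.ne')]
    field_simp
    linear_combination heq
  have hfu₁ : f (x₁ ^ (gp / gm)) = n₁ := hfu x₁ n₁ hx₁ hn₁ heq₁
  have hfu₂ : f (x₂ ^ (gp / gm)) = n₂ := hfu x₂ n₂ hx₂ hn₂ heq₂
  have hu₁ : (0:ℝ) < x₁ ^ (gp / gm) := Real.rpow_pos_of_pos hx₁ _
  have hu₂ : (0:ℝ) < x₂ ^ (gp / gm) := Real.rpow_pos_of_pos hx₂ _
  have hxgp : ∀ x : ℝ, 0 < x → (x ^ (gp / gm)) ^ gm = x ^ gp := by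
    intro x hx
    rw [← Real.rpow_mul hx.le]
    congr 1
    field_simp
  have hule : x₁ ^ (gp / gm) ≤ x₂ ^ (gp / gm) := by
    by_contra h
    push_neg at h
    have := hfmono (mem_Ioi.mpr hu₂) (mem_Ioi.mpr hu₁) h
    rw [hfu₁, hfu₂] at this
    linarith
  have hGle := hGmono (mem_Ioi.mpr hu₁) (mem_Ioi.mpr hu₂) hule
  rw [hG] at hGle
  simp only [hfu₁, hfu₂, hxgp x₁ hx₁, hxgp x₂ hx₂] at hGle
  linarith
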